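/- If a and a′ are directed paths in the square annulus X that both pass below the obstruction (or both pass above it), then there exists a directed homotopy from a to a′ in X. (The paper's proof in 2.1 that any two controlled paths on the same side of the obstruction are 2-equivalent.) -/

import Mathlib

open Set

/-- The obstruction: the open square `(1/3, 2/3) × (1/3, 2/3)`. -/
def Qobs : Set (ℝ × ℝ) := Ioo (1/3 : ℝ) (2/3) ×ˢ Ioo (1/3 : ℝ) (2/3)

/-- A directed path in `[0,1]²` avoiding `Q`, with nondecreasing coordinates,
from `(0,0)` to `(1,1)`. -/
def DiPath (Q : Set (ℝ × ℝ)) (a : ℝ → ℝ × ℝ) : Prop :=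
  ContinuousOn a (Icc 0 1) ∧
  (∀ t ∈ Icc (0:ℝ) 1, a t ∈ Icc (0:ℝ) 1 ×ˢ Icc (0:ℝ) 1) ∧
  (∀ t ∈ Icc (0:ℝ) 1, a t ∉ Q) ∧
  MonotoneOn (fun t => (a t).1) (Icc 0 1) ∧
  MonotoneOn (fun t => (a t).2) (Icc 0 1) ∧
  a 0 = (0, 0) ∧ a 1 = (1, 1)

/-- `a` passes below the obstruction. -/
def Below (a : ℝ → ℝ × ℝ) : Prop :=
  ∀ t ∈ Icc (0:ℝ) 1, (a t).1 ∈ Ioo (1/3 : ℝ) (2/3) → (a t).2 ≤ 1/3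

/-- `a` passes above the obstruction. -/
def Above (a : ℝ → ℝ × ℝ) : Prop :=
  ∀ t ∈ Icc (0:ℝ) 1, (a t).1 ∈ Ioo (1/3 : ℝ) (2/3) → (a t).2 ≥ 2/3

/-- A directed homotopy from `a` to `a'` avoiding `Q`: a continuous map
`H : [0,1] × [0,1] → [0,1]²` with `H (-,0) = a`, `H (-,1) = a'`, fixed endpoints
`(0,0)` and `(1,1)`, avoiding `Q`, all of whose intermediate paths have nondecreasing
coordinates. -/
def DiHomotopy (Q : Set (ℝ × ℝ)) (a a' : ℝ → ℝ × ℝ) (H : ℝ → ℝ → ℝ × ℝ) : Prop :=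
  ContinuousOn (fun p : ℝ × ℝ => H p.1 p.2) (Icc 0 1 ×ˢ Icc 0 1) ∧
  (∀ t ∈ Icc (0:ℝ) 1, ∀ s ∈ Icc (0:ℝ) 1, H t s ∈ Icc (0:ℝ) 1 ×ˢ Icc (0:ℝ) 1) ∧
  (∀ t ∈ Icc (0:ℝ) 1, H t 0 = a t) ∧
  (∀ t ∈ Icc (0:ℝ) 1, H t 1 = a' t) ∧
  (∀ s ∈ Icc (0:ℝ) 1, H 0 s = (0, 0)) ∧
  (∀ s ∈ Icc (0:ℝ) 1, H 1 s = (1, 1)) ∧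
  (∀ t ∈ Icc (0:ℝ) 1, ∀ s ∈ Icc (0:ℝ) 1, H t s ∉ Q) ∧
  (∀ s ∈ Icc (0:ℝ) 1, MonotoneOn (fun t => (H t s).1) (Icc 0 1) ∧
    MonotoneOn (fun t => (H t s).2) (Icc 0 1))

/-! ### Auxiliary scalar functions -/

/-- Ceiling function for the `y`-clamp: the largest admissible `y` over a given `x`,
for paths passing below the obstruction. -/
noncomputable def ffB (x : ℝ) : ℝ := min x (max (1/3) (2*x - 1))

/-- The monotone curve `x = GGB y` hugging the corner `(2/3, 1/3)` from below/right. -/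
noncomputable def GGB (y : ℝ) : ℝ := min (2*y) ((y+1)/2)

/-- Clamp to `[0,1]`. -/
noncomputable def cl01 (r : ℝ) : ℝ := max 0 (min 1 r)

lemma ffB_mono : Monotone ffB := fun x y h =>
  min_le_min h (max_le_max le_rfl (by linarith))

lemma GGB_mono : Monotone GGB := fun x y h =>
  min_le_min (by linarith) (by linarith)

lemma cl01_nonneg (r : ℝ) : 0 ≤ cl01 r := le_max_left _ _

lemma cl01_le_one (r : ℝ) : cl01 r ≤ 1 := max_le (by norm_num) (min_le_left _ _)

lemma cl01_of_nonpos {r : ℝ} (h : r ≤ 0) : cl01 r = 0 :=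
  max_eq_left ((min_le_right _ _).trans h)

lemma cl01_of_one_le {r : ℝ} (h : 1 ≤ r) : cl01 r = 1 := by
  unfold cl01
  rw [min_eq_left h]
  exact max_eq_right (by norm_num)

lemma ffB_nonneg {x : ℝ} (hx : 0 ≤ x) : 0 ≤ ffB x :=
  le_min hx (le_max_of_le_left (by norm_num))

lemma ffB_le_self (x : ℝ) : ffB x ≤ x := min_le_left _ _

lemma ffB_zero : ffB 0 = 0 := by norm_num [ffB]

lemma ffB_one : ffB 1 = 1 := by norm_num [ffB]

lemma two_thirds_lt_of_ffB {x : ℝ} (h : 1/3 < ffB x) : 2/3 < x := by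
  have h2 : 1/3 < max (1/3) (2*x-1) := lt_of_lt_of_le h (min_le_right _ _)
  rcases lt_max_iff.mp h2 with h3 | h3
  · linarith
  · linarith

lemma GGB_nonneg {y : ℝ} (h : 0 ≤ y) : 0 ≤ GGB y := le_min (by linarith) (by linarith)

lemma GGB_le_one {y : ℝ} (h : y ≤ 1) : GGB y ≤ 1 := (min_le_right _ _).trans (by linarith)

lemma GGB_zero : GGB 0 = 0 := by norm_num [GGB]

lemma GGB_one : GGB 1 = 1 := by norm_num [GGB]

lemma GGB_ge {y : ℝ} (h : 1/3 ≤ y) : 2/3 ≤ GGB y := le_min (by linarith) (by linarith)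

lemma ffB_cont : Continuous ffB := by unfold ffB; fun_prop

lemma GGB_cont : Continuous GGB := by unfold GGB; fun_prop

lemma cl01_cont : Continuous cl01 := by unfold cl01; fun_prop

lemma contOn_min {α : Type*} [TopologicalSpace α] {f g : α → ℝ} {s : Set α}
    (hf : ContinuousOn f s) (hg : ContinuousOn g s) :
    ContinuousOn (fun x => min (f x) (g x)) s :=
  continuous_min.comp_continuousOn (hf.prodMk hg)

lemma contOn_max {α : Type*} [TopologicalSpace α] {f g : α → ℝ} {s : Set α}
    (hf : ContinuousOn f s) (hg : ContinuousOn g s) :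
    ContinuousOn (fun x => max (f x) (g x)) s :=
  continuous_max.comp_continuousOn (hf.prodMk hg)

/-! ### The homotopy for the "below" case -/

/-- Second coordinate of the homotopy for the below case. -/
noncomputable def YYf (a a' : ℝ → ℝ × ℝ) (t s : ℝ) : ℝ :=
  (1 - cl01 (5*s-2)) * max (min (a t).2 (ffB (a t).1)) ((a t).2 - 2 * min (5*s) 1)
  + cl01 (5*s-2) * max (min (a' t).2 (ffB (a' t).1)) ((a' t).2 - 2 * min (5*(1-s)) 1)

/-- First coordinate of the homotopy for the below case. -/
noncomputable def XXf (a a' : ℝ → ℝ × ℝ) (t s : ℝ) : ℝ :=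
  (1 - min (cl01 (5*s-1)) (cl01 (4-5*s)))
    * ((1 - cl01 (5*s-2)) * (a t).1 + cl01 (5*s-2) * (a' t).1)
  + min (cl01 (5*s-1)) (cl01 (4-5*s)) * GGB (YYf a a' t s)

/-- The homotopy for the below case. -/
noncomputable def Hbel (a a' : ℝ → ℝ × ℝ) (t s : ℝ) : ℝ × ℝ :=
  (XXf a a' t s, YYf a a' t s)

lemma q_nonneg (s : ℝ) : 0 ≤ min (cl01 (5*s-1)) (cl01 (4-5*s)) :=
  le_min (cl01_nonneg _) (cl01_nonneg _)

lemma q_le_one (s : ℝ) : min (cl01 (5*s-1)) (cl01 (4-5*s)) ≤ 1 :=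
  (min_le_left _ _).trans (cl01_le_one _)

theorem diHomotopy_below (a a' : ℝ → ℝ × ℝ)
    (ha : DiPath Qobs a) (ha' : DiPath Qobs a')
    (hbel : Below a) (hbel' : Below a') :
    DiHomotopy Qobs a a' (Hbel a a') := by
  obtain ⟨haC, haR, haQ, hax, hay, ha0, ha1⟩ := ha
  obtain ⟨haC', haR', haQ', hax', hay', ha0', ha1'⟩ := ha'
  -- basic bounds
  have hx0 : ∀ t ∈ Icc (0:ℝ) 1, 0 ≤ (a t).1 := fun t ht => (haR t ht).1.1
  have hx1 : ∀ t ∈ Icc (0:ℝ) 1, (a t).1 ≤ 1 := fun t ht => (haR t ht).1.2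
  have hy0 : ∀ t ∈ Icc (0:ℝ) 1, 0 ≤ (a t).2 := fun t ht => (haR t ht).2.1
  have hy1 : ∀ t ∈ Icc (0:ℝ) 1, (a t).2 ≤ 1 := fun t ht => (haR t ht).2.2
  have hx0' : ∀ t ∈ Icc (0:ℝ) 1, 0 ≤ (a' t).1 := fun t ht => (haR' t ht).1.1
  have hx1' : ∀ t ∈ Icc (0:ℝ) 1, (a' t).1 ≤ 1 := fun t ht => (haR' t ht).1.2
  have hy0' : ∀ t ∈ Icc (0:ℝ) 1, 0 ≤ (a' t).2 := fun t ht => (haR' t ht).2.1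
  have hy1' : ∀ t ∈ Icc (0:ℝ) 1, (a' t).2 ≤ 1 := fun t ht => (haR' t ht).2.2
  refine ⟨?_, ?_, ?_, ?_, ?_, ?_, ?_, ?_⟩
  · -- continuity
    have hA1 : ContinuousOn (fun p : ℝ × ℝ => (a p.1).1) (Icc 0 1 ×ˢ Icc 0 1) :=
      (haC.comp continuousOn_fst (fun p hp => hp.1)).fst
    have hA2 : ContinuousOn (fun p : ℝ × ℝ => (a p.1).2) (Icc 0 1 ×ˢ Icc 0 1) :=
      (haC.comp continuousOn_fst (fun p hp => hp.1)).snd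
    have hB1 : ContinuousOn (fun p : ℝ × ℝ => (a' p.1).1) (Icc 0 1 ×ˢ Icc 0 1) :=
      (haC'.comp continuousOn_fst (fun p hp => hp.1)).fst
    have hB2 : ContinuousOn (fun p : ℝ × ℝ => (a' p.1).2) (Icc 0 1 ×ˢ Icc 0 1) :=
      (haC'.comp continuousOn_fst (fun p hp => hp.1)).snd
    have hc3 : Continuous (fun p : ℝ × ℝ => cl01 (5*p.2-2)) :=
      cl01_cont.comp (by fun_prop)
    have hq : Continuous (fun p : ℝ × ℝ => min (cl01 (5*p.2-1)) (cl01 (4-5*p.2))) :=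
      (cl01_cont.comp (by fun_prop)).min (cl01_cont.comp (by fun_prop))
    have hm1 : Continuous (fun p : ℝ × ℝ => min (5*p.2) 1) := by fun_prop
    have hm2 : Continuous (fun p : ℝ × ℝ => min (5*(1-p.2)) 1) := by fun_prop
    have hYA : ContinuousOn
        (fun p : ℝ × ℝ => max (min ((a p.1).2) (ffB ((a p.1).1))) ((a p.1).2 - 2 * min (5*p.2) 1))
        (Icc 0 1 ×ˢ Icc 0 1) :=
      contOn_max (contOn_min hA2 (ffB_cont.comp_continuousOn hA1))
        (hA2.sub (continuous_const.mul hm1).continuousOn)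
    have hYB : ContinuousOn
        (fun p : ℝ × ℝ => max (min ((a' p.1).2) (ffB ((a' p.1).1))) ((a' p.1).2 - 2 * min (5*(1-p.2)) 1))
        (Icc 0 1 ×ˢ Icc 0 1) :=
      contOn_max (contOn_min hB2 (ffB_cont.comp_continuousOn hB1))
        (hB2.sub (continuous_const.mul hm2).continuousOn)
    have hYY : ContinuousOn (fun p : ℝ × ℝ => YYf a a' p.1 p.2) (Icc 0 1 ×ˢ Icc 0 1) := by
      unfold YYf
      exact ((continuous_const.sub hc3).continuousOn.mul hYA).add (hc3.continuousOn.mul hYB)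
    have hXX : ContinuousOn (fun p : ℝ × ℝ => XXf a a' p.1 p.2) (Icc 0 1 ×ˢ Icc 0 1) := by
      unfold XXf
      exact ((continuous_const.sub hq).continuousOn.mul
          (((continuous_const.sub hc3).continuousOn.mul hA1).add (hc3.continuousOn.mul hB1))).add
        (hq.continuousOn.mul (GGB_cont.comp_continuousOn hYY))
    exact hXX.prodMk hYY
  · -- range in the unit square
    intro t ht s hs
    show (XXf a a' t s, YYf a a' t s) ∈ Icc (0:ℝ) 1 ×ˢ Icc (0:ℝ) 1
    have hc30 := cl01_nonneg (5*s-2)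
    have hc31 := cl01_le_one (5*s-2)
    have hq0 := q_nonneg s
    have hq1 := q_le_one s
    have hm10 : 0 ≤ min (5*s) 1 := le_min (by linarith [hs.1]) (by norm_num)
    have hm20 : 0 ≤ min (5*(1-s)) 1 := le_min (by linarith [hs.2]) (by norm_num)
    have hyt0 : 0 ≤ min ((a t).2) (ffB ((a t).1)) := le_min (hy0 t ht) (ffB_nonneg (hx0 t ht))
    have hyt0' : 0 ≤ min ((a' t).2) (ffB ((a' t).1)) := le_min (hy0' t ht) (ffB_nonneg (hx0' t ht))
    have hYA0 : 0 ≤ max (min ((a t).2) (ffB ((a t).1))) ((a t).2 - 2 * min (5*s) 1) :=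
      le_max_of_le_left hyt0
    have hYA1 : max (min ((a t).2) (ffB ((a t).1))) ((a t).2 - 2 * min (5*s) 1) ≤ 1 :=
      max_le ((min_le_left _ _).trans (hy1 t ht)) (by linarith [hy1 t ht])
    have hYB0 : 0 ≤ max (min ((a' t).2) (ffB ((a' t).1))) ((a' t).2 - 2 * min (5*(1-s)) 1) :=
      le_max_of_le_left hyt0'
    have hYB1 : max (min ((a' t).2) (ffB ((a' t).1))) ((a' t).2 - 2 * min (5*(1-s)) 1) ≤ 1 :=
      max_le ((min_le_left _ _).trans (hy1' t ht)) (by linarith [hy1' t ht])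
    have hY0 : 0 ≤ YYf a a' t s := by
      unfold YYf; nlinarith
    have hY1 : YYf a a' t s ≤ 1 := by
      unfold YYf; nlinarith
    have hG0 : 0 ≤ GGB (YYf a a' t s) := GGB_nonneg hY0
    have hG1 : GGB (YYf a a' t s) ≤ 1 := GGB_le_one hY1
    have hI0 : 0 ≤ (1 - cl01 (5*s-2)) * (a t).1 + cl01 (5*s-2) * (a' t).1 := by
      nlinarith [hx0 t ht, hx0' t ht]
    have hI1 : (1 - cl01 (5*s-2)) * (a t).1 + cl01 (5*s-2) * (a' t).1 ≤ 1 := by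
      nlinarith [hx1 t ht, hx1' t ht]
    have hXa : 0 ≤ XXf a a' t s := by
      unfold XXf
      nlinarith [mul_nonneg (sub_nonneg.mpr (q_le_one s)) hI0, mul_nonneg (q_nonneg s) hG0]
    have hXb : XXf a a' t s ≤ 1 := by
      unfold XXf
      nlinarith [mul_le_mul_of_nonneg_left hI1 (sub_nonneg.mpr (q_le_one s)),
        mul_le_mul_of_nonneg_left hG1 (q_nonneg s)]
    exact ⟨⟨hXa, hXb⟩, hY0, hY1⟩
  · -- H t 0 = a t
    intro t ht
    have e1 : cl01 (5*(0:ℝ)-2) = 0 := cl01_of_nonpos (by norm_num)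
    have e2 : cl01 (5*(0:ℝ)-1) = 0 := cl01_of_nonpos (by norm_num)
    have e3 : min (5*(0:ℝ)) 1 = 0 := by norm_num
    have eY : YYf a a' t 0 = (a t).2 := by
      unfold YYf
      rw [e1, e3]
      have h4 : (a t).2 - 2*0 = (a t).2 := by ring
      rw [h4, max_eq_right (min_le_left _ _)]
      ring
    have eX : XXf a a' t 0 = (a t).1 := by
      unfold XXf
      rw [e1, e2, min_eq_left (cl01_nonneg _)]
      ring
    show (XXf a a' t 0, YYf a a' t 0) = a t
    rw [eX, eY]
  · -- H t 1 = a' t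
    intro t ht
    have e1 : cl01 (5*(1:ℝ)-2) = 1 := cl01_of_one_le (by norm_num)
    have e2 : cl01 (4-5*(1:ℝ)) = 0 := cl01_of_nonpos (by norm_num)
    have e3 : min (5*((1:ℝ)-1)) 1 = 0 := by norm_num
    have eY : YYf a a' t 1 = (a' t).2 := by
      unfold YYf
      rw [e1, e3]
      have h4 : (a' t).2 - 2*0 = (a' t).2 := by ring
      rw [h4, max_eq_right (min_le_left _ _)]
      ring
    have eX : XXf a a' t 1 = (a' t).1 := by
      unfold XXf
      rw [e1, e2, min_eq_right (cl01_nonneg _)]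
      ring
    show (XXf a a' t 1, YYf a a' t 1) = a' t
    rw [eX, eY]
  · -- H 0 s = (0,0)
    intro s hs
    have hm10 : 0 ≤ min (5*s) 1 := le_min (by linarith [hs.1]) (by norm_num)
    have hm20 : 0 ≤ min (5*(1-s)) 1 := le_min (by linarith [hs.2]) (by norm_num)
    have hax0 : (a 0).1 = 0 := by rw [ha0]
    have hay0 : (a 0).2 = 0 := by rw [ha0]
    have hax0' : (a' 0).1 = 0 := by rw [ha0']
    have hay0' : (a' 0).2 = 0 := by rw [ha0']
    have eY : YYf a a' 0 s = 0 := by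
      unfold YYf
      rw [hax0, hay0, hax0', hay0', ffB_zero]
      rw [min_self, max_eq_left (by linarith), max_eq_left (by linarith)]
      ring
    have eX : XXf a a' 0 s = 0 := by
      unfold XXf
      rw [eY, hax0, hax0', GGB_zero]
      ring
    show (XXf a a' 0 s, YYf a a' 0 s) = ((0:ℝ), (0:ℝ))
    rw [eX, eY]
  · -- H 1 s = (1,1)
    intro s hs
    have hm10 : 0 ≤ min (5*s) 1 := le_min (by linarith [hs.1]) (by norm_num)
    have hm20 : 0 ≤ min (5*(1-s)) 1 := le_min (by linarith [hs.2]) (by norm_num)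
    have hax0 : (a 1).1 = 1 := by rw [ha1]
    have hay0 : (a 1).2 = 1 := by rw [ha1]
    have hax0' : (a' 1).1 = 1 := by rw [ha1']
    have hay0' : (a' 1).2 = 1 := by rw [ha1']
    have eY : YYf a a' 1 s = 1 := by
      unfold YYf
      rw [hax0, hay0, hax0', hay0', ffB_one]
      rw [min_self, max_eq_left (by linarith), max_eq_left (by linarith)]
      ring
    have eX : XXf a a' 1 s = 1 := by
      unfold XXf
      rw [eY, hax0, hax0', GGB_one]
      ring
    show (XXf a a' 1 s, YYf a a' 1 s) = ((1:ℝ), (1:ℝ))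
    rw [eX, eY]
  · -- avoids the obstruction
    intro t ht s hs hmem
    have hmem' : XXf a a' t s ∈ Ioo (1/3 : ℝ) (2/3) ∧ YYf a a' t s ∈ Ioo (1/3 : ℝ) (2/3) := hmem
    obtain ⟨⟨hX1, hX2⟩, ⟨hY1, hY2⟩⟩ := hmem'
    have hq0 := q_nonneg s
    have hq1 := q_le_one s
    rcases le_or_gt s (1/5) with hs1 | hs1
    · -- stage 1 : clamping y of a ; x-coordinate is x(t)
      have e2 : cl01 (5*s-2) = 0 := cl01_of_nonpos (by linarith)
      have e1 : cl01 (5*s-1) = 0 := cl01_of_nonpos (by linarith)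
      have eq0 : min (cl01 (5*s-1)) (cl01 (4-5*s)) = 0 := by
        rw [e1]; exact min_eq_left (cl01_nonneg _)
      have eX : XXf a a' t s = (a t).1 := by
        unfold XXf; rw [eq0, e2]; ring
      have eY : YYf a a' t s
          = max (min ((a t).2) (ffB ((a t).1))) ((a t).2 - 2 * min (5*s) 1) := by
        unfold YYf; rw [e2]; ring
      rw [eX] at hX1 hX2
      have hyle : (a t).2 ≤ 1/3 := hbel t ht ⟨hX1, hX2⟩
      have hm10 : 0 ≤ min (5*s) 1 := le_min (by linarith [hs.1]) (by norm_num)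
      have : YYf a a' t s ≤ 1/3 := by
        rw [eY]
        exact max_le ((min_le_left _ _).trans hyle) (by linarith)
      linarith
    rcases le_or_gt s (2/5) with hs2 | hs2
    · -- stage 2 : moving x of a towards the curve
      have e2 : cl01 (5*s-2) = 0 := cl01_of_nonpos (by linarith)
      have e3 : min (5*s) 1 = 1 := min_eq_right (by linarith)
      have eY : YYf a a' t s = min ((a t).2) (ffB ((a t).1)) := by
        unfold YYf
        rw [e2, e3, max_eq_left (by
          have := le_min (hy0 t ht) (ffB_nonneg (hx0 t ht))
          linarith [hy1 t ht])]
        ring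
      have eX : XXf a a' t s
          = (1 - min (cl01 (5*s-1)) (cl01 (4-5*s))) * (a t).1
            + min (cl01 (5*s-1)) (cl01 (4-5*s)) * GGB (YYf a a' t s) := by
        unfold XXf; rw [e2]; ring
      have hG : 2/3 ≤ GGB (YYf a a' t s) := GGB_ge hY1.le
      have hxgt : 2/3 < (a t).1 := by
        rw [eY] at hY1
        exact two_thirds_lt_of_ffB (lt_of_lt_of_le hY1 (min_le_right _ _))
      rw [eX] at hX2
      nlinarith
    rcases le_or_gt s (3/5) with hs3 | hs3
    · -- stage 3 : moving along the curve
      have e1 : cl01 (5*s-1) = 1 := cl01_of_one_le (by linarith)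
      have e4 : cl01 (4-5*s) = 1 := cl01_of_one_le (by linarith)
      have eX : XXf a a' t s = GGB (YYf a a' t s) := by
        unfold XXf; rw [e1, e4, min_self]; ring
      have hG : 2/3 ≤ GGB (YYf a a' t s) := GGB_ge hY1.le
      rw [eX] at hX2
      linarith
    rcases le_or_gt s (4/5) with hs4 | hs4
    · -- stage 4 : moving x of a' from the curve
      have e2 : cl01 (5*s-2) = 1 := cl01_of_one_le (by linarith)
      have e3 : min (5*(1-s)) 1 = 1 := min_eq_right (by linarith)
      have hmaxeq : max (min ((a' t).2) (ffB ((a' t).1))) ((a' t).2 - 2 * (1:ℝ))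
          = min ((a' t).2) (ffB ((a' t).1)) := by
        apply max_eq_left
        have := le_min (hy0' t ht) (ffB_nonneg (hx0' t ht))
        linarith [hy1' t ht]
      have eY : YYf a a' t s = min ((a' t).2) (ffB ((a' t).1)) := by
        unfold YYf
        rw [e2, e3, hmaxeq]
        ring
      have eX : XXf a a' t s
          = (1 - min (cl01 (5*s-1)) (cl01 (4-5*s))) * (a' t).1
            + min (cl01 (5*s-1)) (cl01 (4-5*s)) * GGB (YYf a a' t s) := by
        unfold XXf; rw [e2]; ring
      have hG : 2/3 ≤ GGB (YYf a a' t s) := GGB_ge hY1.le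
      have hxgt : 2/3 < (a' t).1 := by
        rw [eY] at hY1
        exact two_thirds_lt_of_ffB (lt_of_lt_of_le hY1 (min_le_right _ _))
      rw [eX] at hX2
      nlinarith
    · -- stage 5 : unclamping y of a'
      have e2 : cl01 (5*s-2) = 1 := cl01_of_one_le (by linarith)
      have e4 : cl01 (4-5*s) = 0 := cl01_of_nonpos (by linarith)
      have eq0 : min (cl01 (5*s-1)) (cl01 (4-5*s)) = 0 := by
        rw [e4]; exact min_eq_right (cl01_nonneg _)
      have eX : XXf a a' t s = (a' t).1 := by
        unfold XXf; rw [eq0, e2]; ring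
      have eY : YYf a a' t s
          = max (min ((a' t).2) (ffB ((a' t).1))) ((a' t).2 - 2 * min (5*(1-s)) 1) := by
        unfold YYf; rw [e2]; ring
      rw [eX] at hX1 hX2
      have hyle : (a' t).2 ≤ 1/3 := hbel' t ht ⟨hX1, hX2⟩
      have hm20 : 0 ≤ min (5*(1-s)) 1 := le_min (by linarith [hs.2]) (by norm_num)
      have : YYf a a' t s ≤ 1/3 := by
        rw [eY]
        exact max_le ((min_le_left _ _).trans hyle) (by linarith)
      linarith
  · -- monotonicity of the intermediate paths
    intro s hs
    have hc30 := cl01_nonneg (5*s-2)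
    have hc31 := cl01_le_one (5*s-2)
    have hq0 := q_nonneg s
    have hq1 := q_le_one s
    have hYmono : ∀ t ∈ Icc (0:ℝ) 1, ∀ u ∈ Icc (0:ℝ) 1, t ≤ u →
        YYf a a' t s ≤ YYf a a' u s := by
      intro t ht u hu htu
      have h1 : (a t).1 ≤ (a u).1 := hax ht hu htu
      have h2 : (a t).2 ≤ (a u).2 := hay ht hu htu
      have h1' : (a' t).1 ≤ (a' u).1 := hax' ht hu htu
      have h2' : (a' t).2 ≤ (a' u).2 := hay' ht hu htu
      have hYA : max (min ((a t).2) (ffB ((a t).1))) ((a t).2 - 2 * min (5*s) 1)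
          ≤ max (min ((a u).2) (ffB ((a u).1))) ((a u).2 - 2 * min (5*s) 1) :=
        max_le_max (min_le_min h2 (ffB_mono h1)) (by linarith)
      have hYB : max (min ((a' t).2) (ffB ((a' t).1))) ((a' t).2 - 2 * min (5*(1-s)) 1)
          ≤ max (min ((a' u).2) (ffB ((a' u).1))) ((a' u).2 - 2 * min (5*(1-s)) 1) :=
        max_le_max (min_le_min h2' (ffB_mono h1')) (by linarith)
      unfold YYf
      have := mul_le_mul_of_nonneg_left hYA (by linarith : (0:ℝ) ≤ 1 - cl01 (5*s-2))
      have := mul_le_mul_of_nonneg_left hYB hc30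
      linarith
    constructor
    · intro t ht u hu htu
      have h1 : (a t).1 ≤ (a u).1 := hax ht hu htu
      have h1' : (a' t).1 ≤ (a' u).1 := hax' ht hu htu
      have hGm : GGB (YYf a a' t s) ≤ GGB (YYf a a' u s) :=
        GGB_mono (hYmono t ht u hu htu)
      show XXf a a' t s ≤ XXf a a' u s
      unfold XXf
      have hin : (1 - cl01 (5*s-2)) * (a t).1 + cl01 (5*s-2) * (a' t).1
          ≤ (1 - cl01 (5*s-2)) * (a u).1 + cl01 (5*s-2) * (a' u).1 := by
        have := mul_le_mul_of_nonneg_left h1 (by linarith : (0:ℝ) ≤ 1 - cl01 (5*s-2))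
        have := mul_le_mul_of_nonneg_left h1' hc30
        linarith
      have := mul_le_mul_of_nonneg_left hin
        (by linarith : (0:ℝ) ≤ 1 - min (cl01 (5*s-1)) (cl01 (4-5*s)))
      have := mul_le_mul_of_nonneg_left hGm hq0
      linarith
    · intro t ht u hu htu
      exact hYmono t ht u hu htu

/-! ### Reduction of the "above" case to the "below" case -/

/-- Point reflection of the unit square through its center. -/
noncomputable def refl2 (p : ℝ × ℝ) : ℝ × ℝ := (1 - p.1, 1 - p.2)

lemma refl2_cont : Continuous refl2 := by unfold refl2; fun_prop

lemma refl2_Q {p : ℝ × ℝ} : refl2 p ∈ Qobs ↔ p ∈ Qobs := by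
  constructor
  · rintro ⟨⟨h1, h2⟩, ⟨h3, h4⟩⟩
    exact ⟨⟨by simp [refl2] at h1 h2 ⊢; linarith, by simp [refl2] at h1 h2 ⊢; linarith⟩,
      ⟨by simp [refl2] at h3 h4 ⊢; linarith, by simp [refl2] at h3 h4 ⊢; linarith⟩⟩
  · rintro ⟨⟨h1, h2⟩, ⟨h3, h4⟩⟩
    exact ⟨⟨by simp [refl2]; linarith, by simp [refl2]; linarith⟩,
      ⟨by simp [refl2]; linarith, by simp [refl2]; linarith⟩⟩

lemma mem_Icc_flip {t : ℝ} (ht : t ∈ Icc (0:ℝ) 1) : 1 - t ∈ Icc (0:ℝ) 1 :=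
  ⟨by linarith [ht.2], by linarith [ht.1]⟩

/-- Two directed paths in the square annulus passing on the same side of the obstruction
are joined by a directed homotopy. (The proof in 2.1 that any two controlled paths on the
same side of the obstruction are 2-equivalent.) -/
theorem diHomotopy_of_same_side (a a' : ℝ → ℝ × ℝ)
    (ha : DiPath Qobs a) (ha' : DiPath Qobs a')
    (hside : (Below a ∧ Below a') ∨ (Above a ∧ Above a')) :
    ∃ H : ℝ → ℝ → ℝ × ℝ, DiHomotopy Qobs a a' H := by
  rcases hside with ⟨hb, hb'⟩ | ⟨hab, hab'⟩
  · exact ⟨Hbel a a', diHomotopy_below a a' ha ha' hb hb'⟩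
  · -- reduce to the below case via the reflection (x, y) ↦ (1-x, 1-y), t ↦ 1-t
    have mkpath : ∀ c : ℝ → ℝ × ℝ, DiPath Qobs c → Above c →
        DiPath Qobs (fun t => refl2 (c (1 - t))) ∧ Below (fun t => refl2 (c (1 - t))) := by
      intro c hc habove
      obtain ⟨hcC, hcR, hcQ, hcx, hcy, hc0, hc1⟩ := hc
      refine ⟨⟨?_, ?_, ?_, ?_, ?_, ?_, ?_⟩, ?_⟩
      · exact refl2_cont.comp_continuousOn
          (hcC.comp (by fun_prop) (fun t ht => mem_Icc_flip ht))
      · intro t ht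
        have h := hcR (1-t) (mem_Icc_flip ht)
        exact ⟨⟨by simp [refl2]; linarith [h.1.2], by simp [refl2]; linarith [h.1.1]⟩,
          ⟨by simp [refl2]; linarith [h.2.2], by simp [refl2]; linarith [h.2.1]⟩⟩
      · intro t ht hmem
        exact hcQ (1-t) (mem_Icc_flip ht) (refl2_Q.mp hmem)
      · intro t ht u hu htu
        have := hcx (mem_Icc_flip hu) (mem_Icc_flip ht) (by linarith)
        simp only [refl2]
        linarith
      · intro t ht u hu htu
        have := hcy (mem_Icc_flip hu) (mem_Icc_flip ht) (by linarith)
        simp only [refl2]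
        linarith
      · simp [refl2, hc1]
      · simp [refl2, hc0]
      · intro t ht hx
        have h1 : (c (1-t)).1 ∈ Ioo (1/3 : ℝ) (2/3) := by
          simp only [refl2] at hx
          exact ⟨by linarith [hx.2], by linarith [hx.1]⟩
        have := habove (1-t) (mem_Icc_flip ht) h1
        simp only [refl2]
        linarith
    obtain ⟨hbp, hbB⟩ := mkpath a ha hab
    obtain ⟨hbp', hbB'⟩ := mkpath a' ha' hab'
    set b : ℝ → ℝ × ℝ := fun t => refl2 (a (1 - t)) with hbdef
    set b' : ℝ → ℝ × ℝ := fun t => refl2 (a' (1 - t)) with hbdef'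
    have hK := diHomotopy_below b b' hbp hbp' hbB hbB'
    obtain ⟨hKC, hKR, hK0, hK1, hKl, hKr, hKQ, hKm⟩ := hK
    refine ⟨fun t s => refl2 (Hbel b b' (1 - t) s), ?_, ?_, ?_, ?_, ?_, ?_, ?_, ?_⟩
    · apply refl2_cont.comp_continuousOn
      have hf : ContinuousOn (fun p : ℝ × ℝ => ((1:ℝ) - p.1, p.2))
          (Icc (0:ℝ) 1 ×ˢ Icc (0:ℝ) 1) := by fun_prop
      have hmaps : MapsTo (fun p : ℝ × ℝ => ((1:ℝ) - p.1, p.2))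
          (Icc (0:ℝ) 1 ×ˢ Icc (0:ℝ) 1) (Icc (0:ℝ) 1 ×ˢ Icc (0:ℝ) 1) := by
        intro p hp
        simp only [Set.mem_prod] at hp ⊢
        exact ⟨mem_Icc_flip hp.1, hp.2⟩
      exact hKC.comp hf hmaps
    · intro t ht s hs
      have h := hKR (1-t) (mem_Icc_flip ht) s hs
      exact ⟨⟨by simp [refl2]; linarith [h.1.2], by simp [refl2]; linarith [h.1.1]⟩,
        ⟨by simp [refl2]; linarith [h.2.2], by simp [refl2]; linarith [h.2.1]⟩⟩
    · intro t ht
      show refl2 (Hbel b b' (1 - t) 0) = a t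
      rw [hK0 (1-t) (mem_Icc_flip ht)]
      show refl2 (refl2 (a (1 - (1 - t)))) = a t
      simp [refl2]
    · intro t ht
      show refl2 (Hbel b b' (1 - t) 1) = a' t
      rw [hK1 (1-t) (mem_Icc_flip ht)]
      show refl2 (refl2 (a' (1 - (1 - t)))) = a' t
      simp [refl2]
    · intro s hs
      show refl2 (Hbel b b' (1 - 0) s) = ((0:ℝ), (0:ℝ))
      have h10 : (1:ℝ) - 0 = 1 := by norm_num
      rw [h10, hKr s hs]
      simp [refl2]
    · intro s hs
      show refl2 (Hbel b b' (1 - 1) s) = ((1:ℝ), (1:ℝ))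
      have h11 : (1:ℝ) - 1 = 0 := by norm_num
      rw [h11, hKl s hs]
      simp [refl2]
    · intro t ht s hs hmem
      exact hKQ (1-t) (mem_Icc_flip ht) s hs (refl2_Q.mp hmem)
    · intro s hs
      obtain ⟨hm1, hm2⟩ := hKm s hs
      constructor
      · intro t ht u hu htu
        have := hm1 (mem_Icc_flip hu) (mem_Icc_flip ht) (by linarith)
        simp only [refl2]
        linarith
      · intro t ht u hu htu
        have := hm2 (mem_Icc_flip hu) (mem_Icc_flip ht) (by linarith)
        simp only [refl2]
        linarith
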